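/- Let C be a finitely complete pointed category with coequalizers in which regular epimorphisms are stable under binary products. If C is unital, then C satisfies property (P): the product of any two coequalizer diagrams is a coequalizer diagram. -/

import Mathlib

open CategoryTheory Limits

/-- `q` is a coequalizer of the parallel pair `(u, v)`. -/
def IsCoeq {C : Type*} [Category C] {T X Q : C} (u v : T ⟶ X) (q : X ⟶ Q) : Prop :=
  ∃ h : u ≫ q = v ≫ q, Nonempty (IsColimit (Cofork.ofπ q h))

/-- Property (P): the product of two coequalizer diagrams is a coequalizer diagram. -/
def PropertyP (C : Type*) [Category C] [HasBinaryProducts C] : Prop :=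
  ∀ {T₁ T₂ X X' Y Y' : C} (u v : T₁ ⟶ X) (u' v' : T₂ ⟶ Y) (q₁ : X ⟶ X') (q₂ : Y ⟶ Y'),
    IsCoeq u v q₁ → IsCoeq u' v' q₂ →
      IsCoeq (prod.map u u') (prod.map v v') (prod.map q₁ q₂)

/-- A regular epimorphism: a coequalizer of some parallel pair. -/
def IsRegEpi {C : Type*} [Category C] {X Q : C} (q : X ⟶ Q) : Prop :=
  ∃ (T : C) (a b : T ⟶ X), IsCoeq a b q

/-- A generalized element `m : S ⟶ X` belongs to the (sub)object `r : R ⟶ X` if it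
factors through `r`. -/
def Factors {C : Type*} [Category C] {R X S : C} (r : R ⟶ X) (m : S ⟶ X) : Prop :=
  ∃ h : S ⟶ R, h ≫ r = m

/-- A pointed category is unital if for any binary relation `r : R ↪ A ⨯ B` and
generalized elements `a`, `b`, `(a,0) ∈ R` and `(0,b) ∈ R` imply `(a,b) ∈ R`. -/
def Unital (C : Type*) [Category C] [HasZeroMorphisms C] [HasBinaryProducts C] : Prop :=
  ∀ {R A B : C} (r : R ⟶ A ⨯ B), Mono r → ∀ {S : C} (a : S ⟶ A) (b : S ⟶ B),
    Factors r (prod.lift a 0) → Factors r (prod.lift 0 b) → Factors r (prod.lift a b)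

/-- A coequalizer of any pair is also the coequalizer of its kernel pair. -/
lemma isCoeq_kernelPair {C : Type*} [Category C] [HasPullbacks C] {T X Q : C}
    {a b : T ⟶ X} {q : X ⟶ Q} (h : IsCoeq a b q) :
    IsCoeq (pullback.fst q q) (pullback.snd q q) q := by
  obtain ⟨hab, ⟨hc⟩⟩ := h
  refine ⟨pullback.condition, ⟨Cofork.IsColimit.mk _
    (fun s => Cofork.IsColimit.desc hc s.π ?_) (fun s => ?_) (fun s m hm => ?_)⟩⟩
  · have hj : pullback.lift a b hab ≫ pullback.fst q q ≫ s.π =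
        pullback.lift a b hab ≫ pullback.snd q q ≫ s.π := by
      simp only [Category.assoc, ← s.condition]
    rw [pullback.lift_fst_assoc, pullback.lift_snd_assoc] at hj; exact hj
  · exact Cofork.IsColimit.π_desc' hc _ _
  · apply Cofork.IsColimit.hom_ext hc
    rw [Cofork.IsColimit.π_desc']
    exact hm

theorem stmt5 {C : Type*} [Category C] [HasFiniteLimits C] [HasCoequalizers C]
    [HasZeroObject C] [HasZeroMorphisms C]
    (hstab : ∀ {X X' Y Y' : C} (f : X ⟶ X') (g : Y ⟶ Y'),
      IsRegEpi f → IsRegEpi g → IsRegEpi (prod.map f g))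
    (hU : Unital C) : PropertyP C := by
  intro T₁ T₂ X X' Y Y' u v u' v' q₁ q₂ h₁ h₂
  obtain ⟨hq₁, ⟨hc₁⟩⟩ := h₁
  obtain ⟨hq₂, ⟨hc₂⟩⟩ := h₂
  set Q : X ⨯ Y ⟶ X' ⨯ Y' := prod.map q₁ q₂ with hQ
  have hQcond : prod.map u u' ≫ Q = prod.map v v' ≫ Q := by
    rw [hQ, prod.map_map, prod.map_map, hq₁, hq₂]
  -- kernel pair projections of q₁ and q₂
  set c₁ := pullback.fst q₁ q₁
  set c₂ := pullback.snd q₁ q₁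
  set d₁ := pullback.fst q₂ q₂
  set d₂ := pullback.snd q₂ q₂
  -- kernel pair of Q
  set p₁ := pullback.fst Q Q
  set p₂ := pullback.snd Q Q
  -- the key step: any w coequalizing (u×u', v×v') coequalizes the kernel pair of Q
  have hkey : ∀ {Z : C} (w : X ⨯ Y ⟶ Z),
      prod.map u u' ≫ w = prod.map v v' ≫ w → p₁ ≫ w = p₂ ≫ w := by
    intro Z w hw
    -- first component: w (c₁, 0) = w (c₂, 0)
    have key₁ : prod.lift c₁ (0 : pullback q₁ q₁ ⟶ Y) ≫ w = prod.lift c₂ 0 ≫ w := by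
      have hw₁ : u ≫ prod.lift (𝟙 X) (0 : X ⟶ Y) ≫ w =
          v ≫ prod.lift (𝟙 X) (0 : X ⟶ Y) ≫ w := by
        have e₁ : u ≫ prod.lift (𝟙 X) (0 : X ⟶ Y) =
            prod.lift (𝟙 T₁) (0 : T₁ ⟶ T₂) ≫ prod.map u u' := by
          apply Limits.prod.hom_ext <;> simp
        have e₂ : v ≫ prod.lift (𝟙 X) (0 : X ⟶ Y) =
            prod.lift (𝟙 T₁) (0 : T₁ ⟶ T₂) ≫ prod.map v v' := by
          apply Limits.prod.hom_ext <;> simp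
        rw [← Category.assoc, ← Category.assoc, e₁, e₂, Category.assoc, Category.assoc, hw]
      have hfac := Cofork.IsColimit.π_desc' hc₁ _ hw₁
      have hcc : c₁ ≫ prod.lift (𝟙 X) (0 : X ⟶ Y) ≫ w =
          c₂ ≫ prod.lift (𝟙 X) (0 : X ⟶ Y) ≫ w := by
        rw [← hfac, ← Category.assoc, ← Category.assoc]
        congr 1
        exact pullback.condition
      have e₁ : prod.lift c₁ (0 : pullback q₁ q₁ ⟶ Y) =
          c₁ ≫ prod.lift (𝟙 X) (0 : X ⟶ Y) := by
        apply Limits.prod.hom_ext <;> simp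
      have e₂ : prod.lift c₂ (0 : pullback q₁ q₁ ⟶ Y) =
          c₂ ≫ prod.lift (𝟙 X) (0 : X ⟶ Y) := by
        apply Limits.prod.hom_ext <;> simp
      rw [e₁, e₂, Category.assoc, Category.assoc, hcc]
    -- second component: w (0, d₁) = w (0, d₂)
    have key₂ : prod.lift (0 : pullback q₂ q₂ ⟶ X) d₁ ≫ w = prod.lift 0 d₂ ≫ w := by
      have hw₂ : u' ≫ prod.lift (0 : Y ⟶ X) (𝟙 Y) ≫ w =
          v' ≫ prod.lift (0 : Y ⟶ X) (𝟙 Y) ≫ w := by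
        have e₁ : u' ≫ prod.lift (0 : Y ⟶ X) (𝟙 Y) =
            prod.lift (0 : T₂ ⟶ T₁) (𝟙 T₂) ≫ prod.map u u' := by
          apply Limits.prod.hom_ext <;> simp
        have e₂ : v' ≫ prod.lift (0 : Y ⟶ X) (𝟙 Y) =
            prod.lift (0 : T₂ ⟶ T₁) (𝟙 T₂) ≫ prod.map v v' := by
          apply Limits.prod.hom_ext <;> simp
        rw [← Category.assoc, ← Category.assoc, e₁, e₂, Category.assoc, Category.assoc, hw]
      have hfac := Cofork.IsColimit.π_desc' hc₂ _ hw₂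
      have hdd : d₁ ≫ prod.lift (0 : Y ⟶ X) (𝟙 Y) ≫ w =
          d₂ ≫ prod.lift (0 : Y ⟶ X) (𝟙 Y) ≫ w := by
        rw [← hfac, ← Category.assoc, ← Category.assoc]
        congr 1
        exact pullback.condition
      have e₁ : prod.lift (0 : pullback q₂ q₂ ⟶ X) d₁ =
          d₁ ≫ prod.lift (0 : Y ⟶ X) (𝟙 Y) := by
        apply Limits.prod.hom_ext <;> simp
      have e₂ : prod.lift (0 : pullback q₂ q₂ ⟶ X) d₂ =
          d₂ ≫ prod.lift (0 : Y ⟶ X) (𝟙 Y) := by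
        apply Limits.prod.hom_ext <;> simp
      rw [e₁, e₂, Category.assoc, Category.assoc, hdd]
    -- components of the kernel pair of Q
    set x₁ := p₁ ≫ prod.fst
    set y₁ := p₁ ≫ prod.snd
    set x₂ := p₂ ≫ prod.fst
    set y₂ := p₂ ≫ prod.snd
    have hx : x₁ ≫ q₁ = x₂ ≫ q₁ := by
      have := pullback.condition (f := Q) (g := Q)
      have h' : p₁ ≫ Q ≫ prod.fst = p₂ ≫ Q ≫ prod.fst := by
        rw [← Category.assoc, ← Category.assoc, this]
      simpa [hQ, x₁, x₂] using h'
    have hy : y₁ ≫ q₂ = y₂ ≫ q₂ := by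
      have := pullback.condition (f := Q) (g := Q)
      have h' : p₁ ≫ Q ≫ prod.snd = p₂ ≫ Q ≫ prod.snd := by
        rw [← Category.assoc, ← Category.assoc, this]
      simpa [hQ, y₁, y₂] using h'
    set a : pullback Q Q ⟶ pullback q₁ q₁ := pullback.lift x₁ x₂ hx with ha
    set b : pullback Q Q ⟶ pullback q₂ q₂ := pullback.lift y₁ y₂ hy with hb
    -- the relation: equalizer of the two "evaluations" of w on the kernel pairs
    set f₁ : pullback q₁ q₁ ⨯ pullback q₂ q₂ ⟶ Z := prod.map c₁ d₁ ≫ w with hf₁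
    set f₂ : pullback q₁ q₁ ⨯ pullback q₂ q₂ ⟶ Z := prod.map c₂ d₂ ≫ w with hf₂
    have hmono : Mono (equalizer.ι f₁ f₂) := inferInstance
    have fac₁ : Factors (equalizer.ι f₁ f₂) (prod.lift a 0) := by
      refine ⟨equalizer.lift (prod.lift a 0) ?_, equalizer.lift_ι _ _⟩
      rw [hf₁, hf₂, ← Category.assoc, ← Category.assoc, prod.lift_map, prod.lift_map]
      have e₁ : a ≫ c₁ = x₁ := pullback.lift_fst _ _ _
      have e₂ : a ≫ c₂ = x₂ := pullback.lift_snd _ _ _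
      rw [e₁, e₂, zero_comp, zero_comp]
      -- lift x₁ 0 ≫ w = lift x₂ 0 ≫ w via key₁
      have g₁ : prod.lift x₁ (0 : pullback Q Q ⟶ Y) = a ≫ prod.lift c₁ 0 := by
        apply Limits.prod.hom_ext <;> simp [ha, c₁, c₂, prod.lift_fst, prod.lift_snd, pullback.lift_fst, pullback.lift_snd]
      have g₂ : prod.lift x₂ (0 : pullback Q Q ⟶ Y) = a ≫ prod.lift c₂ 0 := by
        apply Limits.prod.hom_ext <;> simp [ha, c₁, c₂, prod.lift_fst, prod.lift_snd, pullback.lift_fst, pullback.lift_snd]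
      rw [g₁, g₂, Category.assoc, Category.assoc, key₁]
    have fac₂ : Factors (equalizer.ι f₁ f₂) (prod.lift 0 b) := by
      refine ⟨equalizer.lift (prod.lift 0 b) ?_, equalizer.lift_ι _ _⟩
      rw [hf₁, hf₂, ← Category.assoc, ← Category.assoc, prod.lift_map, prod.lift_map]
      have e₁ : b ≫ d₁ = y₁ := pullback.lift_fst _ _ _
      have e₂ : b ≫ d₂ = y₂ := pullback.lift_snd _ _ _
      rw [e₁, e₂, zero_comp, zero_comp]
      have g₁ : prod.lift (0 : pullback Q Q ⟶ X) y₁ = b ≫ prod.lift 0 d₁ := by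
        apply Limits.prod.hom_ext <;> simp [hb, d₁, d₂, prod.lift_fst, prod.lift_snd, pullback.lift_fst, pullback.lift_snd]
      have g₂ : prod.lift (0 : pullback Q Q ⟶ X) y₂ = b ≫ prod.lift 0 d₂ := by
        apply Limits.prod.hom_ext <;> simp [hb, d₁, d₂, prod.lift_fst, prod.lift_snd, pullback.lift_fst, pullback.lift_snd]
      rw [g₁, g₂, Category.assoc, Category.assoc, key₂]
    obtain ⟨e, he⟩ := hU (equalizer.ι f₁ f₂) hmono a b fac₁ fac₂
    -- conclude
    have hab : prod.lift a b ≫ f₁ = prod.lift a b ≫ f₂ := by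
      rw [← he, Category.assoc, Category.assoc, equalizer.condition]
    have l₁ : prod.lift a b ≫ f₁ = p₁ ≫ w := by
      rw [hf₁, ← Category.assoc, prod.lift_map]
      have : prod.lift (a ≫ c₁) (b ≫ d₁) = p₁ := by
        apply Limits.prod.hom_ext <;> simp [ha, hb, c₁, d₁, x₁, y₁, prod.lift_fst, prod.lift_snd, pullback.lift_fst, pullback.lift_snd]
      rw [this]
    have l₂ : prod.lift a b ≫ f₂ = p₂ ≫ w := by
      rw [hf₂, ← Category.assoc, prod.lift_map]
      have : prod.lift (a ≫ c₂) (b ≫ d₂) = p₂ := by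
        apply Limits.prod.hom_ext <;> simp [ha, hb, c₂, d₂, x₂, y₂, prod.lift_fst, prod.lift_snd, pullback.lift_fst, pullback.lift_snd]
      rw [this]
    rw [← l₁, ← l₂, hab]
  -- Q is a regular epi, hence the coequalizer of its kernel pair
  have hreg : IsRegEpi Q := hstab q₁ q₂ ⟨T₁, u, v, hq₁, ⟨hc₁⟩⟩ ⟨T₂, u', v', hq₂, ⟨hc₂⟩⟩
  obtain ⟨Tr, ar, br, hr⟩ := hreg
  obtain ⟨hpc, ⟨hk⟩⟩ := isCoeq_kernelPair hr
  refine ⟨hQcond, ⟨Cofork.IsColimit.mk _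
    (fun s => Cofork.IsColimit.desc hk s.π (hkey s.π s.condition))
    (fun s => Cofork.IsColimit.π_desc' hk _ _) (fun s m hm => ?_)⟩⟩
  apply Cofork.IsColimit.hom_ext hk
  rw [Cofork.IsColimit.π_desc']
  exact hm
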